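/- Let p_t be the lognormal density of exponential Brownian motion, a(t) = ψ^{-1}(Kψ(t)) with K ∈ (0,1), and c ∈ (0,K). Define h_t(x) = (1/(1−c))(p_t(x) − c p_{a(t)}(x)) for x > 0. Then for each t > 0, h_t is nonnegative on (0,∞), integrates to 1, and satisfies ∫₀^∞ x h_t(x) dx = 1. -/

import Mathlib

open Real MeasureTheory

/-- The lognormal density of exponential Brownian motion at time `t`. -/
noncomputable def ebmDensity (t x : ℝ) : ℝ :=
  (1 / Real.sqrt (2 * Real.pi)) * (Real.exp (-t / 8) / Real.sqrt t) *
    (Real.exp (-(Real.log x) ^ 2 / (2 * t)) / x ^ ((3 : ℝ) / 2))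

/-- The normalizing function `ψ(t) = √t e^{t/8}`. -/
noncomputable def psi (t : ℝ) : ℝ := Real.sqrt t * Real.exp (t / 8)

/-- Change of variables `x = e^y` for integrals over `(0, ∞)`. -/
lemma cov_exp (f : ℝ → ℝ) :
    (∫ x in Set.Ioi (0 : ℝ), f x) = ∫ y : ℝ, Real.exp y * f (Real.exp y) := by
  have himg : Real.exp '' Set.univ = Set.Ioi (0 : ℝ) := by
    rw [Set.image_univ, Real.range_exp]
  have hderiv : ∀ x ∈ (Set.univ : Set ℝ),
      HasDerivWithinAt Real.exp (Real.exp x) Set.univ x :=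
    fun x _ => (Real.hasDerivAt_exp x).hasDerivWithinAt
  have := integral_image_eq_integral_abs_deriv_smul MeasurableSet.univ hderiv
    Real.exp_injective.injOn f
  rw [himg] at this
  simpa [Real.abs_exp] using this

lemma cov_exp_integrable (f : ℝ → ℝ)
    (h : Integrable fun y => Real.exp y * f (Real.exp y)) :
    IntegrableOn f (Set.Ioi (0 : ℝ)) := by
  have himg : Real.exp '' Set.univ = Set.Ioi (0 : ℝ) := by
    rw [Set.image_univ, Real.range_exp]
  have hderiv : ∀ x ∈ (Set.univ : Set ℝ),
      HasDerivWithinAt Real.exp (Real.exp x) Set.univ x :=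
    fun x _ => (Real.hasDerivAt_exp x).hasDerivWithinAt
  have := integrableOn_image_iff_integrableOn_abs_deriv_smul MeasurableSet.univ hderiv
    Real.exp_injective.injOn f
  rw [himg] at this
  rw [this]
  simpa [Real.abs_exp, IntegrableOn] using h

lemma gauss_integrable (t m : ℝ) (ht : 0 < t) :
    Integrable fun y : ℝ => Real.exp (-(y - m) ^ 2 / (2 * t)) := by
  have h := (integrable_exp_neg_mul_sq (show (0:ℝ) < 1 / (2 * t) by positivity)).comp_sub_right m
  have he : (fun y : ℝ => Real.exp (-(1 / (2 * t)) * (y - m) ^ 2))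
      = fun y : ℝ => Real.exp (-(y - m) ^ 2 / (2 * t)) := by
    funext y; congr 1; field_simp
  rwa [he] at h

lemma gauss_integral (t m : ℝ) (ht : 0 < t) :
    (∫ y : ℝ, Real.exp (-(y - m) ^ 2 / (2 * t))) = Real.sqrt (2 * Real.pi * t) := by
  have h1 : (∫ y : ℝ, Real.exp (-(y - m) ^ 2 / (2 * t)))
      = ∫ y : ℝ, Real.exp (-(1 / (2 * t)) * (y - m) ^ 2) := by
    congr 1 with y; congr 1; field_simp
  rw [h1, integral_sub_right_eq_self (fun y => Real.exp (-(1 / (2 * t)) * y ^ 2)) m,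
    integral_gaussian]
  congr 1
  field_simp

lemma logGauss_integral (t m : ℝ) (ht : 0 < t) :
    (∫ x in Set.Ioi (0 : ℝ), Real.exp (-(Real.log x - m) ^ 2 / (2 * t)) / x)
      = Real.sqrt (2 * Real.pi * t) := by
  rw [cov_exp]
  rw [show (fun y : ℝ => Real.exp y * (Real.exp (-(Real.log (Real.exp y) - m) ^ 2 / (2 * t)) / Real.exp y))
      = fun y : ℝ => Real.exp (-(y - m) ^ 2 / (2 * t)) by
    funext y
    rw [Real.log_exp]
    field_simp]
  exact gauss_integral t m ht

lemma logGauss_integrableOn (t m : ℝ) (ht : 0 < t) :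
    IntegrableOn (fun x => Real.exp (-(Real.log x - m) ^ 2 / (2 * t)) / x)
      (Set.Ioi (0 : ℝ)) := by
  apply cov_exp_integrable
  have : (fun y : ℝ => Real.exp y * (Real.exp (-(Real.log (Real.exp y) - m) ^ 2 / (2 * t)) / Real.exp y))
      = fun y : ℝ => Real.exp (-(y - m) ^ 2 / (2 * t)) := by
    funext y
    rw [Real.log_exp]
    field_simp
  rw [this]
  exact gauss_integrable t m ht

lemma ebm_eq (t x : ℝ) (ht : 0 < t) (hx : 0 < x) :
    ebmDensity t x = (1 / Real.sqrt (2 * Real.pi * t)) *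
      (Real.exp (-(Real.log x - (-(t / 2))) ^ 2 / (2 * t)) / x) := by
  obtain ⟨y, rfl⟩ : ∃ y, x = Real.exp y := ⟨Real.log x, (Real.exp_log hx).symm⟩
  have h1 : Real.exp (-t / 8) * (Real.exp (-y ^ 2 / (2 * t)) / Real.exp (y * (3 / 2)))
      = Real.exp (-(y - -(t / 2)) ^ 2 / (2 * t)) / Real.exp y := by
    rw [← Real.exp_sub, ← Real.exp_sub, ← Real.exp_add]
    congr 1
    field_simp
    ring
  unfold ebmDensity
  rw [Real.rpow_def_of_pos (Real.exp_pos y), Real.log_exp,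
    Real.sqrt_mul (by positivity) t, ← h1]
  ring

lemma mul_ebm_eq (t x : ℝ) (ht : 0 < t) (hx : 0 < x) :
    x * ebmDensity t x = (1 / Real.sqrt (2 * Real.pi * t)) *
      (Real.exp (-(Real.log x - t / 2) ^ 2 / (2 * t)) / x) := by
  obtain ⟨y, rfl⟩ : ∃ y, x = Real.exp y := ⟨Real.log x, (Real.exp_log hx).symm⟩
  have h1 : Real.exp y * (Real.exp (-t / 8) *
        (Real.exp (-y ^ 2 / (2 * t)) / Real.exp (y * (3 / 2))))
      = Real.exp (-(y - t / 2) ^ 2 / (2 * t)) / Real.exp y := by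
    rw [← Real.exp_sub, ← Real.exp_sub, ← Real.exp_add, ← Real.exp_add]
    congr 1
    field_simp
    ring
  unfold ebmDensity
  rw [Real.rpow_def_of_pos (Real.exp_pos y), Real.log_exp,
    Real.sqrt_mul (by positivity) t, ← h1]
  ring

lemma ebm_integral (t : ℝ) (ht : 0 < t) :
    (∫ x in Set.Ioi (0 : ℝ), ebmDensity t x) = 1 := by
  rw [setIntegral_congr_fun measurableSet_Ioi
    (fun x hx => ebm_eq t x ht (Set.mem_Ioi.mp hx))]
  rw [integral_const_mul, logGauss_integral t _ ht]
  rw [one_div, inv_mul_cancel₀ (by positivity)]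

lemma ebm_integrableOn (t : ℝ) (ht : 0 < t) :
    IntegrableOn (ebmDensity t) (Set.Ioi (0 : ℝ)) := by
  exact MeasureTheory.IntegrableOn.congr_fun
    ((logGauss_integrableOn t (-(t/2)) ht).const_mul (1 / Real.sqrt (2 * Real.pi * t)))
    (fun x hx => (ebm_eq t x ht (Set.mem_Ioi.mp hx)).symm) measurableSet_Ioi

lemma mul_ebm_integral (t : ℝ) (ht : 0 < t) :
    (∫ x in Set.Ioi (0 : ℝ), x * ebmDensity t x) = 1 := by
  rw [setIntegral_congr_fun measurableSet_Ioi
    (fun x hx => mul_ebm_eq t x ht (Set.mem_Ioi.mp hx))]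
  rw [integral_const_mul, logGauss_integral t _ ht]
  rw [one_div, inv_mul_cancel₀ (by positivity)]

lemma mul_ebm_integrableOn (t : ℝ) (ht : 0 < t) :
    IntegrableOn (fun x => x * ebmDensity t x) (Set.Ioi (0 : ℝ)) := by
  exact MeasureTheory.IntegrableOn.congr_fun
    ((logGauss_integrableOn t (t/2) ht).const_mul (1 / Real.sqrt (2 * Real.pi * t)))
    (fun x hx => (mul_ebm_eq t x ht (Set.mem_Ioi.mp hx)).symm) measurableSet_Ioi

lemma ebm_psi (s x : ℝ) :
    ebmDensity s x = (1 / Real.sqrt (2 * Real.pi)) * (1 / psi s) *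
      (Real.exp (-(Real.log x) ^ 2 / (2 * s)) / x ^ ((3 : ℝ) / 2)) := by
  unfold ebmDensity psi
  congr 2
  rw [neg_div, Real.exp_neg, inv_eq_one_div, div_div, mul_comm]

lemma psi_pos {s : ℝ} (hs : 0 < s) : 0 < psi s := by
  unfold psi; positivity

theorem fakeEBM_mixture_density {c K : ℝ} (hc : 0 < c) (hcK : c < K) (hK : K < 1)
    (a : ℝ → ℝ) (ha_pos : ∀ t > 0, 0 < a t)
    (ha : ∀ t > 0, psi (a t) = K * psi t) :
    ∀ t > (0 : ℝ),
      (∀ x > (0 : ℝ),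
        0 ≤ (1 / (1 - c)) * (ebmDensity t x - c * ebmDensity (a t) x)) ∧
      (∫ x in Set.Ioi (0 : ℝ),
        (1 / (1 - c)) * (ebmDensity t x - c * ebmDensity (a t) x)) = 1 ∧
      (∫ x in Set.Ioi (0 : ℝ),
        x * ((1 / (1 - c)) * (ebmDensity t x - c * ebmDensity (a t) x))) = 1 := by
  intro t ht
  have hc1 : 0 < 1 - c := by linarith
  have hK0 : 0 < K := lt_trans hc hcK
  have hu : 0 < a t := ha_pos t ht
  have hau : psi (a t) = K * psi t := ha t ht
  -- a t ≤ t
  have hat : a t ≤ t := by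
    by_contra h
    push_neg at h
    have h1 : psi t < psi (a t) := by
      unfold psi
      exact mul_lt_mul (Real.sqrt_lt_sqrt ht.le h)
        (Real.exp_le_exp.mpr (by linarith)) (Real.exp_pos _) (Real.sqrt_nonneg _)
    rw [hau] at h1
    nlinarith [psi_pos ht]
  refine ⟨?_, ?_, ?_⟩
  · intro x hx
    apply mul_nonneg (by positivity)
    rw [sub_nonneg]
    have hstep : c * ebmDensity (a t) x ≤ K * ebmDensity (a t) x := by
      apply mul_le_mul_of_nonneg_right hcK.le
      rw [ebm_psi]
      have := psi_pos hu
      positivity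
    refine le_trans hstep ?_
    rw [ebm_psi, ebm_psi, hau]
    have hpt := psi_pos ht
    rw [show K * ((1 / Real.sqrt (2 * Real.pi)) * (1 / (K * psi t)) *
        (Real.exp (-(Real.log x) ^ 2 / (2 * a t)) / x ^ ((3 : ℝ) / 2)))
      = (1 / Real.sqrt (2 * Real.pi)) * (1 / psi t) *
        (Real.exp (-(Real.log x) ^ 2 / (2 * a t)) / x ^ ((3 : ℝ) / 2)) by
      field_simp]
    have hexp : Real.exp (-(Real.log x) ^ 2 / (2 * a t))
        ≤ Real.exp (-(Real.log x) ^ 2 / (2 * t)) := by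
      apply Real.exp_le_exp.mpr
      rw [neg_div, neg_div, neg_le_neg_iff]
      apply div_le_div_of_nonneg_left (by positivity) (by linarith) (by linarith)
    gcongr
  · rw [integral_const_mul, integral_sub (ebm_integrableOn t ht)
      ((ebm_integrableOn (a t) hu).const_mul c), integral_const_mul,
      ebm_integral t ht, ebm_integral (a t) hu]
    field_simp
  · have hrw : ∀ x : ℝ, x * ((1 / (1 - c)) * (ebmDensity t x - c * ebmDensity (a t) x))
        = (1 / (1 - c)) * (x * ebmDensity t x - c * (x * ebmDensity (a t) x)) := by
      intro x; ring
    simp_rw [hrw]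
    rw [integral_const_mul, integral_sub (mul_ebm_integrableOn t ht)
      ((mul_ebm_integrableOn (a t) hu).const_mul c), integral_const_mul,
      mul_ebm_integral t ht, mul_ebm_integral (a t) hu]
    field_simp
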